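/- Let φ₁, φ₂, ψ₁, ψ₂ ∈ H^∞ with ‖(T_{φ₁}, T_{φ₂})‖ ≤ 1 as a row operator and ‖(T_{ψ₁}; T_{ψ₂})‖ ≤ 1 as a column operator, and set φ₃ = φ₁ψ₁ + φ₂ψ₂. Then 0 ≤ T_{φ₁}T_{φ₁}* + T_{φ₂}T_{φ₂}* − T_{φ₃}T_{φ₃}* ≤ I on the Hardy space H². -/

import Mathlib

set_option synthInstance.maxHeartbeats 800000
set_option maxHeartbeats 1000000

open ContinuousLinearMap

/-- The Hardy space `H²` over the unit disk, modelled as `ℓ²(ℕ)` via Taylor coefficients. -/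
abbrev HardySpace : Type := lp (fun _ : ℕ => ℂ) 2

/-- `A` is the analytic Toeplitz (multiplication) operator on `H² = ℓ²(ℕ)` whose symbol is the
bounded analytic function with Taylor coefficient sequence `a`. -/
def IsToeplitz (a : ℕ → ℂ) (A : HardySpace →L[ℂ] HardySpace) : Prop :=
  ∀ (f : HardySpace) (n : ℕ), (A f) n = ∑ k ∈ Finset.range (n + 1), a k * f (n - k)

/-- If `φ₁, φ₂, ψ₁, ψ₂ ∈ H^∞` with `‖(T_{φ₁} T_{φ₂})‖ ≤ 1` (row) and `‖(T_{ψ₁}; T_{ψ₂})‖ ≤ 1`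
(column), and `φ₃ = φ₁ψ₁ + φ₂ψ₂` (so its coefficients are the convolutions), then
`0 ≤ T_{φ₁}T_{φ₁}^* + T_{φ₂}T_{φ₂}^* − T_{φ₃}T_{φ₃}^* ≤ I` on `H²`. -/
lemma conv_aux (a b f : ℕ → ℂ) (n : ℕ) :
    ∑ k ∈ Finset.range (n+1), a k * ∑ j ∈ Finset.range (n-k+1), b j * f (n-k-j)
    = ∑ m ∈ Finset.range (n+1), (∑ j ∈ Finset.range (m+1), a j * b (m-j)) * f (n-m) := by
  simp only [Finset.mul_sum, Finset.sum_mul]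
  rw [Finset.sum_sigma', Finset.sum_sigma']
  refine Finset.sum_nbij' (i := fun p => (⟨p.1 + p.2, p.1⟩ : Σ _ : ℕ, ℕ))
    (j := fun p => (⟨p.2, p.1 - p.2⟩ : Σ _ : ℕ, ℕ)) ?_ ?_ ?_ ?_ ?_
  · rintro ⟨k, j⟩ h
    simp only [Finset.mem_sigma, Finset.mem_range] at *
    omega
  · rintro ⟨m, j⟩ h
    simp only [Finset.mem_sigma, Finset.mem_range] at *
    omega
  · rintro ⟨k, j⟩ h
    simp [Nat.add_sub_cancel_left]
  · rintro ⟨m, j⟩ h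
    simp only [Finset.mem_sigma, Finset.mem_range] at h
    have : j + (m - j) = m := by omega
    simp [this]
  · rintro ⟨k, j⟩ h
    simp only [Finset.mem_sigma, Finset.mem_range] at h
    have h1 : k + j - k = j := by omega
    have h2 : n - (k + j) = n - k - j := by omega
    rw [h1, h2]
    ring

theorem toeplitz_corona_triplet (a₁ a₂ b₁ b₂ : ℕ → ℂ)
    (A₁ A₂ B₁ B₂ A₃ : HardySpace →L[ℂ] HardySpace)
    (hA₁ : IsToeplitz a₁ A₁) (hA₂ : IsToeplitz a₂ A₂)
    (hB₁ : IsToeplitz b₁ B₁) (hB₂ : IsToeplitz b₂ B₂)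
    (hA₃ : IsToeplitz
      (fun n => ∑ j ∈ Finset.range (n + 1), (a₁ j * b₁ (n - j) + a₂ j * b₂ (n - j))) A₃)
    (R : WithLp 2 (HardySpace × HardySpace) →L[ℂ] HardySpace)
    (hR : ∀ x : WithLp 2 (HardySpace × HardySpace),
      R x = A₁ (WithLp.equiv 2 (HardySpace × HardySpace) x).1
          + A₂ (WithLp.equiv 2 (HardySpace × HardySpace) x).2)
    (hRnorm : ‖R‖ ≤ 1)
    (C : HardySpace →L[ℂ] WithLp 2 (HardySpace × HardySpace))
    (hC : ∀ f : HardySpace, WithLp.equiv 2 (HardySpace × HardySpace) (C f) = (B₁ f, B₂ f))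
    (hCnorm : ‖C‖ ≤ 1) :
    (A₁ ∘L adjoint A₁ + A₂ ∘L adjoint A₂ - A₃ ∘L adjoint A₃).IsPositive ∧
      (1 - (A₁ ∘L adjoint A₁ + A₂ ∘L adjoint A₂ - A₃ ∘L adjoint A₃)).IsPositive := by
  classical
  -- Step 1: A₃ = R ∘L C
  have hA₃eq : A₃ = R ∘L C := by
    ext f n
    have hCf1 : (WithLp.equiv 2 (HardySpace × HardySpace) (C f)).1 = B₁ f := by rw [hC]
    have hCf2 : (WithLp.equiv 2 (HardySpace × HardySpace) (C f)).2 = B₂ f := by rw [hC]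
    have : R (C f) = A₁ (B₁ f) + A₂ (B₂ f) := by rw [hR, hCf1, hCf2]
    calc (A₃ f) n
        = ∑ m ∈ Finset.range (n+1),
            (∑ j ∈ Finset.range (m+1), (a₁ j * b₁ (m-j) + a₂ j * b₂ (m-j))) * f (n-m) :=
          hA₃ f n
      _ = ∑ m ∈ Finset.range (n+1), (∑ j ∈ Finset.range (m+1), a₁ j * b₁ (m-j)) * f (n-m)
          + ∑ m ∈ Finset.range (n+1), (∑ j ∈ Finset.range (m+1), a₂ j * b₂ (m-j)) * f (n-m) := by
          rw [← Finset.sum_add_distrib]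
          congr 1; funext m
          rw [Finset.sum_add_distrib, add_mul]
      _ = (A₁ (B₁ f)) n + (A₂ (B₂ f)) n := by
          rw [hA₁ (B₁ f) n, hA₂ (B₂ f) n]
          congr 1
          · rw [← conv_aux]
            exact Finset.sum_congr rfl fun k hk => by rw [hB₁ f (n-k)]
          · rw [← conv_aux]
            exact Finset.sum_congr rfl fun k hk => by rw [hB₂ f (n-k)]
      _ = ((R ∘L C) f) n := by
          rw [comp_apply, this, lp.coeFn_add]
          rfl
  -- Step 2: components of adjoint R
  have hRadj1 : ∀ x : HardySpace, (adjoint R x).fst = adjoint A₁ x := by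
    intro x
    apply ext_inner_right ℂ
    intro u
    have key : inner ℂ (adjoint R x)
        ((WithLp.equiv 2 (HardySpace × HardySpace)).symm (u, 0)) = (inner ℂ x (R ((WithLp.equiv 2 (HardySpace × HardySpace)).symm (u, 0))) : ℂ) :=
      adjoint_inner_left R _ _
    rw [WithLp.prod_inner_apply] at key
    simp only [WithLp.equiv_symm_apply, WithLp.ofLp_toLp, inner_zero_right, add_zero] at key
    change inner ℂ (adjoint R x).ofLp.1 u = _
    rw [key, hR]
    simp [adjoint_inner_left]
  have hRadj2 : ∀ x : HardySpace, (adjoint R x).snd = adjoint A₂ x := by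
    intro x
    apply ext_inner_right ℂ
    intro u
    have key : inner ℂ (adjoint R x)
        ((WithLp.equiv 2 (HardySpace × HardySpace)).symm (0, u)) = (inner ℂ x (R ((WithLp.equiv 2 (HardySpace × HardySpace)).symm (0, u))) : ℂ) :=
      adjoint_inner_left R _ _
    rw [WithLp.prod_inner_apply] at key
    simp only [WithLp.equiv_symm_apply, WithLp.ofLp_toLp, inner_zero_right, zero_add] at key
    change inner ℂ (adjoint R x).ofLp.2 u = _
    rw [key, hR]
    simp [adjoint_inner_left]
  have hRnormsq : ∀ x : HardySpace,
      ‖adjoint A₁ x‖^2 + ‖adjoint A₂ x‖^2 = ‖adjoint R x‖^2 := by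
    intro x
    rw [WithLp.prod_norm_sq_eq_of_L2, hRadj1, hRadj2]
  -- norm bounds
  have hRadjnorm : ∀ x : HardySpace, ‖adjoint R x‖ ≤ ‖x‖ := by
    intro x
    calc ‖adjoint R x‖ ≤ ‖adjoint R‖ * ‖x‖ := le_opNorm _ _
      _ ≤ 1 * ‖x‖ := by
          apply mul_le_mul_of_nonneg_right _ (norm_nonneg x)
          rw [LinearIsometryEquiv.norm_map adjoint R]; exact hRnorm
      _ = ‖x‖ := one_mul _
  have hA₃adj : ∀ x : HardySpace, ‖adjoint A₃ x‖ ≤ ‖adjoint R x‖ := by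
    intro x
    rw [hA₃eq, adjoint_comp]
    calc ‖(adjoint C ∘L adjoint R) x‖ = ‖adjoint C (adjoint R x)‖ := rfl
      _ ≤ ‖adjoint C‖ * ‖adjoint R x‖ := le_opNorm _ _
      _ ≤ 1 * ‖adjoint R x‖ := by
          apply mul_le_mul_of_nonneg_right _ (norm_nonneg _)
          rw [LinearIsometryEquiv.norm_map adjoint C]; exact hCnorm
      _ = ‖adjoint R x‖ := one_mul _
  -- reApplyInnerSelf computations
  have hre : ∀ (A : HardySpace →L[ℂ] HardySpace) (x : HardySpace),
      RCLike.re (inner ℂ ((A ∘L adjoint A) x) x : ℂ) = ‖adjoint A x‖^2 := by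
    intro A x
    rw [comp_apply, ← adjoint_inner_right A (adjoint A x) x, inner_self_eq_norm_sq]
  set D := A₁ ∘L adjoint A₁ + A₂ ∘L adjoint A₂ - A₃ ∘L adjoint A₃ with hD
  have hDval : ∀ x : HardySpace, RCLike.re (inner ℂ (D x) x : ℂ)
      = ‖adjoint A₁ x‖^2 + ‖adjoint A₂ x‖^2 - ‖adjoint A₃ x‖^2 := by
    intro x
    rw [hD]
    simp only [sub_apply, add_apply, inner_sub_left, inner_add_left, map_sub, map_add]
    rw [hre A₁ x, hre A₂ x, hre A₃ x]
  have hDsa : IsSelfAdjoint D := by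
    rw [isSelfAdjoint_iff']
    rw [hD]
    simp only [map_sub, map_add, adjoint_comp, adjoint_adjoint]
  constructor
  · refine ⟨isSelfAdjoint_iff_isSymmetric.mp hDsa, fun x => ?_⟩
    rw [reApplyInnerSelf, hDval x]
    have h1 : ‖adjoint A₃ x‖^2 ≤ ‖adjoint R x‖^2 := by
      apply sq_le_sq' _ (hA₃adj x)
      linarith [norm_nonneg (adjoint A₃ x), norm_nonneg (adjoint R x), hA₃adj x]
    rw [← hRnormsq x] at h1
    linarith
  · refine ⟨?_, fun x => ?_⟩
    · exact isSelfAdjoint_iff_isSymmetric.mp ((IsSelfAdjoint.one _).sub hDsa)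
    · rw [reApplyInnerSelf]
      simp only [sub_apply, one_apply, inner_sub_left, map_sub]
      rw [hDval x, ContinuousLinearMap.one_apply, inner_self_eq_norm_sq]
      have h2 : ‖adjoint R x‖^2 ≤ ‖x‖^2 := by
        apply sq_le_sq' _ (hRadjnorm x)
        linarith [norm_nonneg (adjoint R x), norm_nonneg x, hRadjnorm x]
      rw [← hRnormsq x] at h2
      have h3 : (0:ℝ) ≤ ‖adjoint A₃ x‖^2 := sq_nonneg _
      linarith
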